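/- Let M be a TEM, let (r,n) be a point of M, and let Γ be a finite set of formulas all of whose members are true at (r,n) in M. Then there exists a minimal fully expanded extension Δ of Γ such that Δ is not patently inconsistent and every formula of Δ is true at (r,n) in M. -/

import Mathlib

namespace CMATEL

/-- A coalition is a nonempty set of agents. -/
def Coalition (Agt : Type) : Type := {A : Set Agt // A.Nonempty}

/-- The singleton coalition `{a}`. -/
def single {Agt : Type} (a : Agt) : Coalition Agt := ⟨{a}, Set.singleton_nonempty a⟩

/-- Formulas of the language L. -/
inductive Formula (Agt AP : Type) : Type where
  | atom : AP → Formula Agt AP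
  | neg  : Formula Agt AP → Formula Agt AP
  | and  : Formula Agt AP → Formula Agt AP → Formula Agt AP
  | next : Formula Agt AP → Formula Agt AP
  | untl : Formula Agt AP → Formula Agt AP → Formula Agt AP
  | dk   : Coalition Agt → Formula Agt AP → Formula Agt AP
  | ck   : Coalition Agt → Formula Agt AP → Formula Agt AP

variable {Agt AP : Type}

def Formula.imp (φ ψ : Formula Agt AP) : Formula Agt AP :=
  Formula.neg (Formula.and φ (Formula.neg ψ))
def Formula.or (φ ψ : Formula Agt AP) : Formula Agt AP :=
  Formula.neg (Formula.and (Formula.neg φ) (Formula.neg ψ))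
def Formula.iff (φ ψ : Formula Agt AP) : Formula Agt AP :=
  Formula.and (φ.imp ψ) (ψ.imp φ)

/-- The set of subformulas of a formula. -/
def Formula.subf : Formula Agt AP → Set (Formula Agt AP)
  | .atom p   => {Formula.atom p}
  | .neg φ    => insert (Formula.neg φ) φ.subf
  | .and φ ψ  => insert (Formula.and φ ψ) (φ.subf ∪ ψ.subf)
  | .next φ   => insert (Formula.next φ) φ.subf
  | .untl φ ψ => insert (Formula.untl φ ψ) (φ.subf ∪ ψ.subf)
  | .dk A φ   => insert (Formula.dk A φ) φ.subf
  | .ck A φ   => insert (Formula.ck A φ) φ.subf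

/-- A temporal-epistemic system (TES): a nonempty set of states, a nonempty set
of runs, and, for every coalition `A`, relations `R^D_A` and `R^C_A` on points,
where `R^C_A` is the reflexive transitive closure of the union of `R^D_{A'}`
over coalitions `A' ⊆ A`. -/
structure TES (Agt : Type) where
  State : Type
  stateNE : Nonempty State
  runs : Set (ℕ → State)
  runsNE : runs.Nonempty
  RD : Coalition Agt → ↥runs × ℕ → ↥runs × ℕ → Prop
  RC : Coalition Agt → ↥runs × ℕ → ↥runs × ℕ → Prop
  hRC : ∀ A : Coalition Agt, RC A =
    Relation.ReflTransGen (fun x y => ∃ A' : Coalition Agt, A'.1 ⊆ A.1 ∧ RD A' x y)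

abbrev TES.Point (G : TES Agt) : Type := ↥G.runs × ℕ

/-- Synchrony: epistemically related points have the same time component. -/
def TES.Synchronous (G : TES Agt) : Prop :=
  ∀ (A : Coalition Agt) (x y : G.Point), G.RD A x y → x.2 = y.2

/-- A TEF: each `R^D_A` is an equivalence, and `R^D_A = ⋂_{a ∈ A} R^D_{{a}}`. -/
def IsTEF (G : TES Agt) : Prop :=
  (∀ A : Coalition Agt, Equivalence (G.RD A)) ∧
  (∀ (A : Coalition Agt) (x y : G.Point), G.RD A x y ↔ ∀ a ∈ A.1, G.RD (single a) x y)

/-- A pseudo-TEF: each `R^D_A` is an equivalence, and `R^D_A ⊆ R^D_B` for `B ⊆ A`. -/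
def IsPseudoTEF (G : TES Agt) : Prop :=
  (∀ A : Coalition Agt, Equivalence (G.RD A)) ∧
  (∀ (A B : Coalition Agt), B.1 ⊆ A.1 → ∀ x y : G.Point, G.RD A x y → G.RD B x y)

/-- Satisfaction at points `R × ℕ`, given the epistemic relations and a labeling. -/
def Sat {R : Type} (RD RC : Coalition Agt → R × ℕ → R × ℕ → Prop)
    (lab : R × ℕ → Set AP) : R × ℕ → Formula Agt AP → Prop
  | x, .atom p => p ∈ lab x
  | x, .neg φ => ¬ Sat RD RC lab x φ
  | x, .and φ ψ => Sat RD RC lab x φ ∧ Sat RD RC lab x ψ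
  | x, .next φ => Sat RD RC lab (x.1, x.2 + 1) φ
  | x, .untl φ ψ => ∃ i, x.2 ≤ i ∧ Sat RD RC lab (x.1, i) ψ ∧
      ∀ j, x.2 ≤ j → j < i → Sat RD RC lab (x.1, j) φ
  | x, .dk A φ => ∀ y, RD A x y → Sat RD RC lab y φ
  | x, .ck A φ => ∀ y, RC A x y → Sat RD RC lab y φ

/-- A temporal-epistemic model: a TEF together with a labeling of points. -/
structure TEM (Agt AP : Type) where
  G : TES Agt
  lab : G.Point → Set AP
  isTEF : IsTEF G

def TEM.sat (M : TEM Agt AP) : M.G.Point → Formula Agt AP → Prop :=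
  Sat M.G.RD M.G.RC M.lab

/-- A pseudo temporal-epistemic model: a pseudo-TEF together with a labeling. -/
structure PseudoTEM (Agt AP : Type) where
  G : TES Agt
  lab : G.Point → Set AP
  isPTEF : IsPseudoTEF G

def PseudoTEM.sat (M : PseudoTEM Agt AP) : M.G.Point → Formula Agt AP → Prop :=
  Sat M.G.RD M.G.RC M.lab

/-- `A`-reachability: the reflexive transitive closure of single-agent steps
`R^D_{{a}}`, `a ∈ A`. -/
def AReach (G : TES Agt) (A : Coalition Agt) : G.Point → G.Point → Prop :=
  Relation.ReflTransGen (fun x y => ∃ a ∈ A.1, G.RD (single a) x y)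

/-- Fully expanded sets of formulas. -/
def FullyExpanded (Δ : Set (Formula Agt AP)) : Prop :=
  (∀ φ : Formula Agt AP, Formula.neg (Formula.neg φ) ∈ Δ → φ ∈ Δ) ∧
  (∀ φ ψ : Formula Agt AP, Formula.and φ ψ ∈ Δ → φ ∈ Δ ∧ ψ ∈ Δ) ∧
  (∀ φ ψ : Formula Agt AP, Formula.neg (Formula.and φ ψ) ∈ Δ →
      Formula.neg φ ∈ Δ ∨ Formula.neg ψ ∈ Δ) ∧
  (∀ φ : Formula Agt AP, Formula.neg (Formula.next φ) ∈ Δ →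
      Formula.next (Formula.neg φ) ∈ Δ) ∧
  (∀ φ ψ : Formula Agt AP, Formula.untl φ ψ ∈ Δ →
      ψ ∈ Δ ∨ (φ ∈ Δ ∧ Formula.next (Formula.untl φ ψ) ∈ Δ)) ∧
  (∀ φ ψ : Formula Agt AP, Formula.neg (Formula.untl φ ψ) ∈ Δ →
      (Formula.neg ψ ∈ Δ ∧ Formula.neg φ ∈ Δ) ∨
      (Formula.neg ψ ∈ Δ ∧ Formula.neg (Formula.next (Formula.untl φ ψ)) ∈ Δ)) ∧
  (∀ (A A' : Coalition Agt) (φ : Formula Agt AP), Formula.dk A φ ∈ Δ →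
      A.1 ⊆ A'.1 → Formula.dk A' φ ∈ Δ) ∧
  (∀ (A : Coalition Agt) (φ : Formula Agt AP), Formula.dk A φ ∈ Δ → φ ∈ Δ) ∧
  (∀ (A : Coalition Agt) (φ : Formula Agt AP), Formula.ck A φ ∈ Δ →
      ∀ a ∈ A.1, Formula.dk (single a) (Formula.and φ (Formula.ck A φ)) ∈ Δ) ∧
  (∀ (A : Coalition Agt) (φ : Formula Agt AP), Formula.neg (Formula.ck A φ) ∈ Δ →
      ∃ a ∈ A.1, Formula.neg (Formula.dk (single a) (Formula.and φ (Formula.ck A φ))) ∈ Δ) ∧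
  (∀ ψ ∈ Δ, ∀ (A : Coalition Agt) (φ : Formula Agt AP),
      Formula.dk A φ ∈ ψ.subf → Formula.dk A φ ∈ Δ ∨ Formula.neg (Formula.dk A φ) ∈ Δ)

/-- Hintikka-structure conditions (H1)–(H7) for a labeling `H` on a TES. -/
def IsHintikka (G : TES Agt) (H : G.Point → Set (Formula Agt AP)) : Prop :=
  (∀ (x : G.Point) (φ : Formula Agt AP), Formula.neg φ ∈ H x → φ ∉ H x) ∧
  (∀ x : G.Point, FullyExpanded (H x)) ∧
  (∀ (r : ↥G.runs) (n : ℕ) (φ : Formula Agt AP),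
      Formula.next φ ∈ H (r, n) → φ ∈ H (r, n + 1)) ∧
  (∀ (r : ↥G.runs) (n : ℕ) (φ ψ : Formula Agt AP), Formula.untl φ ψ ∈ H (r, n) →
      ∃ i, n ≤ i ∧ ψ ∈ H (r, i) ∧ ∀ j, n ≤ j → j < i → φ ∈ H (r, j)) ∧
  (∀ (x : G.Point) (A : Coalition Agt) (φ : Formula Agt AP),
      Formula.neg (Formula.dk A φ) ∈ H x →
      ∃ y : G.Point, G.RD A x y ∧ Formula.neg φ ∈ H y) ∧
  (∀ (x y : G.Point) (A : Coalition Agt), G.RD A x y →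
      ∀ (A' : Coalition Agt), A'.1 ⊆ A.1 → ∀ φ : Formula Agt AP,
        (Formula.dk A' φ ∈ H x ↔ Formula.dk A' φ ∈ H y)) ∧
  (∀ (x : G.Point) (A : Coalition Agt) (φ : Formula Agt AP),
      Formula.neg (Formula.ck A φ) ∈ H x →
      ∃ y : G.Point, G.RC A x y ∧ Formula.neg φ ∈ H y)

/-- A temporal-epistemic Hintikka structure. -/
structure TEHS (Agt AP : Type) where
  G : TES Agt
  H : G.Point → Set (Formula Agt AP)
  isH : IsHintikka G H

def TEHS.Synchronous (Hs : TEHS Agt AP) : Prop := Hs.G.Synchronous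

/-- Derived relation `R'^D_A`: the reflexive, symmetric and transitive closure of
the union of `R^D_B` over coalitions `B ⊇ A`. -/
def derivedRD (G : TES Agt) (A : Coalition Agt) : G.Point → G.Point → Prop :=
  Relation.EqvGen (fun x y => ∃ B : Coalition Agt, A.1 ⊆ B.1 ∧ G.RD B x y)

/-- Derived relation `R'^C_A`: the transitive closure of the union of
`R'^D_{{a}}` over `a ∈ A`. -/
def derivedRC (G : TES Agt) (A : Coalition Agt) : G.Point → G.Point → Prop :=
  Relation.TransGen (fun x y => ∃ a ∈ A.1, derivedRD G (single a) x y)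

/-- Derived labeling `L(r,n) = H(r,n) ∩ AP`. -/
def derivedLab (Hs : TEHS Agt AP) : Hs.G.Point → Set AP :=
  fun x => {p | Formula.atom p ∈ Hs.H x}

/-- Patently inconsistent set: contains a formula together with its negation. -/
def PatentlyInconsistent (Δ : Set (Formula Agt AP)) : Prop :=
  ∃ φ : Formula Agt AP, φ ∈ Δ ∧ Formula.neg φ ∈ Δ

/-- Minimal fully expanded extension. -/
def MinimalFEE (Γ Δ : Set (Formula Agt AP)) : Prop :=
  FullyExpanded Δ ∧ Γ ⊆ Δ ∧
  ¬ ∃ Δ' : Set (Formula Agt AP), FullyExpanded Δ' ∧ Γ ⊆ Δ' ∧ Δ' ⊂ Δ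

/-- A maximal path from `x` to `y`: consecutive points are related by `R^D_{A_i}`
and by no `R^D_B` for a strictly larger coalition `B`. -/
def IsMaximalPath (G : TES Agt) (m : ℕ) (pts : ℕ → G.Point) (cs : ℕ → Coalition Agt)
    (x y : G.Point) : Prop :=
  pts 0 = x ∧ pts m = y ∧ ∀ i < m,
    G.RD (cs i) (pts i) (pts (i + 1)) ∧
    ∀ B : Coalition Agt, (cs i).1 ⊂ B.1 → ¬ G.RD B (pts i) (pts (i + 1))

/-- A maximal path equals its reduction iff no two consecutive points lie on the
same run and no two consecutive coalition labels coincide. -/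
def IsReducedPath (G : TES Agt) (m : ℕ) (pts : ℕ → G.Point) (cs : ℕ → Coalition Agt) : Prop :=
  (∀ i < m, (pts i).1 ≠ (pts (i + 1)).1) ∧ (∀ i, i + 1 < m → cs i ≠ cs (i + 1))

/-- Forest-likeness: between any two points there is at most one reduced maximal path. -/
def ForestLike (G : TES Agt) : Prop :=
  ∀ (x y : G.Point) (m₁ : ℕ) (pts₁ : ℕ → G.Point) (cs₁ : ℕ → Coalition Agt)
    (m₂ : ℕ) (pts₂ : ℕ → G.Point) (cs₂ : ℕ → Coalition Agt),
    IsMaximalPath G m₁ pts₁ cs₁ x y → IsReducedPath G m₁ pts₁ cs₁ →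
    IsMaximalPath G m₂ pts₂ cs₂ x y → IsReducedPath G m₂ pts₂ cs₂ →
    m₁ = m₂ ∧ (∀ i ≤ m₁, pts₁ i = pts₂ i) ∧ (∀ i < m₁, cs₁ i = cs₂ i)

/-- Finite conjunction of a nonempty list of formulas. -/
def bigAnd : Formula Agt AP → List (Formula Agt AP) → Formula Agt AP
  | φ, [] => φ
  | φ, ψ :: l => Formula.and φ (bigAnd ψ l)

/-- `D_{{a}}(φ ∧ C_A φ)`. -/
def dform (A : Coalition Agt) (φ : Formula Agt AP) (a : Agt) : Formula Agt AP :=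
  Formula.dk (single a) (Formula.and φ (Formula.ck A φ))

/-- The set of all formulas true at a point is fully expanded. -/
lemma fullyExpanded_trueSet (M : TEM Agt AP) (x : M.G.Point) :
    FullyExpanded {φ : Formula Agt AP | M.sat x φ} := by
  classical
  have hrefl : ∀ A : Coalition Agt, M.G.RD A x x := fun A => (M.isTEF.1 A).refl x
  refine ⟨?_, ?_, ?_, ?_, ?_, ?_, ?_, ?_, ?_, ?_, ?_⟩
  · intro φ h
    simp only [Set.mem_setOf_eq, TEM.sat, Sat] at *
    exact not_not.mp h
  · intro φ ψ h
    simp only [Set.mem_setOf_eq, TEM.sat, Sat] at *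
    exact h
  · intro φ ψ h
    simp only [Set.mem_setOf_eq, TEM.sat, Sat] at *
    by_cases hφ : Sat M.G.RD M.G.RC M.lab x φ
    · exact Or.inr (fun hψ => h ⟨hφ, hψ⟩)
    · exact Or.inl hφ
  · intro φ h
    simp only [Set.mem_setOf_eq, TEM.sat, Sat] at *
    exact h
  · intro φ ψ h
    simp only [Set.mem_setOf_eq, TEM.sat, Sat] at *
    obtain ⟨i, hi, hψ, hφ⟩ := h
    rcases eq_or_lt_of_le hi with rfl | hlt
    · left; exact hψ
    · right
      refine ⟨hφ x.2 le_rfl hlt, ⟨i, by omega, hψ, fun j hj1 hj2 => hφ j (by omega) hj2⟩⟩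
  · intro φ ψ h
    simp only [Set.mem_setOf_eq, TEM.sat, Sat] at *
    have hψx : ¬ Sat M.G.RD M.G.RC M.lab x ψ := by
      intro hs
      exact h ⟨x.2, le_rfl, hs, fun j h1 h2 => absurd h1 (by omega)⟩
    by_cases hφx : Sat M.G.RD M.G.RC M.lab x φ
    · right
      refine ⟨hψx, ?_⟩
      rintro ⟨i, h1, h2, h3⟩
      refine h ⟨i, by omega, h2, fun j hj1 hj2 => ?_⟩
      rcases eq_or_lt_of_le hj1 with rfl | hlt
      · exact hφx
      · exact h3 j (by omega) hj2
    · left; exact ⟨hψx, hφx⟩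
  · intro A A' φ h hsub
    simp only [Set.mem_setOf_eq, TEM.sat, Sat] at *
    intro y hy
    exact h y ((M.isTEF.2 A x y).mpr fun a ha => (M.isTEF.2 A' x y).mp hy a (hsub ha))
  · intro A φ h
    simp only [Set.mem_setOf_eq, TEM.sat, Sat] at *
    exact h x (hrefl A)
  · intro A φ h a ha
    simp only [Set.mem_setOf_eq, TEM.sat, Sat] at *
    have hsingle : ∀ y z : M.G.Point, M.G.RD (single a) y z → M.G.RC A y z := by
      intro y z hyz
      rw [M.G.hRC]
      exact Relation.ReflTransGen.single ⟨single a, Set.singleton_subset_iff.mpr ha, hyz⟩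
    intro y hy
    refine ⟨h y (hsingle x y hy), ?_⟩
    intro z hz
    apply h z
    rw [M.G.hRC] at hz ⊢
    exact Relation.ReflTransGen.trans
      (Relation.ReflTransGen.single ⟨single a, Set.singleton_subset_iff.mpr ha, hy⟩) hz
  · intro A φ h
    by_contra hcon
    push_neg at hcon
    simp only [Set.mem_setOf_eq, TEM.sat, Sat] at *
    obtain ⟨a, ha⟩ := A.2
    have hd := not_not.mp (hcon a ha)
    have := hd x (hrefl (single a))
    exact h this.2
  · intro ψ hψ A φ hsub
    simp only [Set.mem_setOf_eq, TEM.sat, Sat] at *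
    by_cases hd : Sat M.G.RD M.G.RC M.lab x (Formula.dk A φ)
    · exact Or.inl hd
    · exact Or.inr hd

/-- In a nonempty `⊆`-chain, any finitely-indexed family has a member below all of them. -/
lemma chain_min {α : Type} {c : Set (Set α)} (hc : IsChain (· ⊆ ·) c)
    {ι : Type} (s : Set ι) (hs : s.Finite) (hne : s.Nonempty)
    (f : ι → Set α) (hf : ∀ i ∈ s, f i ∈ c) :
    ∃ i ∈ s, ∀ j ∈ s, f i ⊆ f j := by
  obtain ⟨i, hi, hmin⟩ := Set.Finite.exists_minimalFor f s hs hne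
  refine ⟨i, hi, fun j hj => ?_⟩
  rcases eq_or_ne (f i) (f j) with h | h
  · exact h.subset
  · rcases hc.total (hf i hi) (hf j hj) with h' | h'
    · exact h'
    · exact hmin hj h'

/-- The intersection of a nonempty chain of fully expanded sets is fully expanded. -/
lemma fullyExpanded_sInter [Finite Agt] {c : Set (Set (Formula Agt AP))}
    (hc : IsChain (· ⊆ ·) c) (hne : c.Nonempty)
    (hfe : ∀ Δ ∈ c, FullyExpanded Δ) : FullyExpanded (⋂₀ c) := by
  classical
  refine ⟨?_, ?_, ?_, ?_, ?_, ?_, ?_, ?_, ?_, ?_, ?_⟩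
  · intro φ h
    exact Set.mem_sInter.mpr fun Δ hΔ => (hfe Δ hΔ).1 φ (Set.mem_sInter.mp h Δ hΔ)
  · intro φ ψ h
    exact ⟨Set.mem_sInter.mpr fun Δ hΔ => ((hfe Δ hΔ).2.1 φ ψ (Set.mem_sInter.mp h Δ hΔ)).1,
      Set.mem_sInter.mpr fun Δ hΔ => ((hfe Δ hΔ).2.1 φ ψ (Set.mem_sInter.mp h Δ hΔ)).2⟩
  · intro φ ψ h
    by_contra hcon
    push_neg at hcon
    obtain ⟨h1, h2⟩ := hcon
    simp only [Set.mem_sInter, not_forall] at h1 h2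
    obtain ⟨Δ1, hΔ1, hn1⟩ := h1
    obtain ⟨Δ2, hΔ2, hn2⟩ := h2
    rcases hc.total hΔ1 hΔ2 with hsub | hsub
    · rcases (hfe Δ1 hΔ1).2.2.1 φ ψ (Set.mem_sInter.mp h Δ1 hΔ1) with h' | h'
      · exact hn1 h'
      · exact hn2 (hsub h')
    · rcases (hfe Δ2 hΔ2).2.2.1 φ ψ (Set.mem_sInter.mp h Δ2 hΔ2) with h' | h'
      · exact hn1 (hsub h')
      · exact hn2 h'
  · intro φ h
    exact Set.mem_sInter.mpr fun Δ hΔ => (hfe Δ hΔ).2.2.2.1 φ (Set.mem_sInter.mp h Δ hΔ)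
  · intro φ ψ h
    by_contra hcon
    push_neg at hcon
    obtain ⟨h1, h2⟩ := hcon
    simp only [Set.mem_sInter, not_forall] at h1
    obtain ⟨Δ1, hΔ1, hn1⟩ := h1
    have h2' : Formula.next (Formula.untl φ ψ) ∉ ⋂₀ c ∨ φ ∉ ⋂₀ c := by
      by_cases hφ : φ ∈ ⋂₀ c
      · exact Or.inl fun hx => (h2 hφ hx)
      · exact Or.inr hφ
    rcases h2' with h2' | h2' <;>
    · simp only [Set.mem_sInter, not_forall] at h2'
      obtain ⟨Δ2, hΔ2, hn2⟩ := h2'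
      rcases hc.total hΔ1 hΔ2 with hsub | hsub
      · rcases (hfe Δ1 hΔ1).2.2.2.2.1 φ ψ (Set.mem_sInter.mp h Δ1 hΔ1) with h' | ⟨h'1, h'2⟩
        · exact hn1 h'
        · first
            | exact hn2 (hsub h'2)
            | exact hn2 (hsub h'1)
      · rcases (hfe Δ2 hΔ2).2.2.2.2.1 φ ψ (Set.mem_sInter.mp h Δ2 hΔ2) with h' | ⟨h'1, h'2⟩
        · exact hn1 (hsub h')
        · first
            | exact hn2 h'2
            | exact hn2 h'1
  · intro φ ψ h
    by_contra hcon
    push_neg at hcon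
    have hψ123 : Formula.neg ψ ∈ ⋂₀ c := by
      refine Set.mem_sInter.mpr fun Δ hΔ => ?_
      rcases (hfe Δ hΔ).2.2.2.2.2.1 φ ψ (Set.mem_sInter.mp h Δ hΔ) with h' | h'
      · exact h'.1
      · exact h'.1
    have hnφ := hcon.1 hψ123
    have hnX := hcon.2 hψ123
    simp only [Set.mem_sInter, not_forall] at hnφ hnX
    obtain ⟨Δ1, hΔ1, hn1⟩ := hnφ
    obtain ⟨Δ2, hΔ2, hn2⟩ := hnX
    rcases hc.total hΔ1 hΔ2 with hs | hs
    · rcases (hfe Δ1 hΔ1).2.2.2.2.2.1 φ ψ (Set.mem_sInter.mp h Δ1 hΔ1) with h' | h'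
      · exact hn1 h'.2
      · exact hn2 (hs h'.2)
    · rcases (hfe Δ2 hΔ2).2.2.2.2.2.1 φ ψ (Set.mem_sInter.mp h Δ2 hΔ2) with h' | h'
      · exact hn1 (hs h'.2)
      · exact hn2 h'.2
  · intro A A' φ h hsub
    exact Set.mem_sInter.mpr fun Δ hΔ =>
      (hfe Δ hΔ).2.2.2.2.2.2.1 A A' φ (Set.mem_sInter.mp h Δ hΔ) hsub
  · intro A φ h
    exact Set.mem_sInter.mpr fun Δ hΔ =>
      (hfe Δ hΔ).2.2.2.2.2.2.2.1 A φ (Set.mem_sInter.mp h Δ hΔ)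
  · intro A φ h a ha
    exact Set.mem_sInter.mpr fun Δ hΔ =>
      (hfe Δ hΔ).2.2.2.2.2.2.2.2.1 A φ (Set.mem_sInter.mp h Δ hΔ) a ha
  · intro A φ h
    by_contra hcon
    push_neg at hcon
    have : ∀ a ∈ A.1, ∃ Δ ∈ c,
        Formula.neg (Formula.dk (single a) (Formula.and φ (Formula.ck A φ))) ∉ Δ := by
      intro a ha
      have := hcon a ha
      simp only [Set.mem_sInter, not_forall] at this
      obtain ⟨Δ, hΔ, hn⟩ := this
      exact ⟨Δ, hΔ, hn⟩
    choose! g hg1 hg2 using this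
    obtain ⟨a0, ha0, hmin⟩ := chain_min hc A.1 A.1.toFinite A.2 g hg1
    obtain ⟨a, ha, hmem⟩ := (hfe (g a0) (hg1 a0 ha0)).2.2.2.2.2.2.2.2.2.1 A φ
      (Set.mem_sInter.mp h (g a0) (hg1 a0 ha0))
    exact hg2 a ha (hmin a ha hmem)
  · intro ψ hψ A φ hsub
    by_contra hcon
    push_neg at hcon
    obtain ⟨h1, h2⟩ := hcon
    simp only [Set.mem_sInter, not_forall] at h1 h2
    obtain ⟨Δ1, hΔ1, hn1⟩ := h1
    obtain ⟨Δ2, hΔ2, hn2⟩ := h2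
    rcases hc.total hΔ1 hΔ2 with hs | hs
    · rcases (hfe Δ1 hΔ1).2.2.2.2.2.2.2.2.2.2 ψ (Set.mem_sInter.mp hψ Δ1 hΔ1) A φ hsub
        with h' | h'
      · exact hn1 h'
      · exact hn2 (hs h')
    · rcases (hfe Δ2 hΔ2).2.2.2.2.2.2.2.2.2.2 ψ (Set.mem_sInter.mp hψ Δ2 hΔ2) A φ hsub
        with h' | h'
      · exact hn1 (hs h')
      · exact hn2 h'

/-- Any finite set `Γ` of formulas all true at a point of a TEM has a
minimal fully expanded extension `Δ` that is not patently inconsistent, all of whose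
members are true at that point. -/
theorem statement_15 {Agt AP : Type} [Fintype Agt] [Nonempty Agt]
    (M : TEM Agt AP) (x : M.G.Point) (Γ : Set (Formula Agt AP))
    (hfin : Γ.Finite) (hΓ : ∀ φ ∈ Γ, M.sat x φ) :
    ∃ Δ : Set (Formula Agt AP), MinimalFEE Γ Δ ∧ ¬ PatentlyInconsistent Δ ∧
      ∀ φ ∈ Δ, M.sat x φ := by
  classical
  set T : Set (Formula Agt AP) := {φ | M.sat x φ} with hT
  have hTfe : FullyExpanded T := fullyExpanded_trueSet M x
  set S : Set (Set (Formula Agt AP)) :=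
    {Δ | FullyExpanded Δ ∧ Γ ⊆ Δ ∧ Δ ⊆ T} with hS
  have hTS : T ∈ S := ⟨hTfe, fun φ h => hΓ φ h, subset_rfl⟩
  have hchain : ∀ c ⊆ S, IsChain (· ⊆ ·) c → c.Nonempty →
      ∃ lb ∈ S, ∀ s ∈ c, lb ⊆ s := by
    intro c hcS hch hcne
    obtain ⟨Δ0, hΔ0⟩ := hcne
    refine ⟨⋂₀ c, ⟨fullyExpanded_sInter hch ⟨Δ0, hΔ0⟩ (fun Δ hΔ => (hcS hΔ).1), ?_, ?_⟩,
      fun s hs => Set.sInter_subset_of_mem hs⟩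
    · exact Set.subset_sInter fun Δ hΔ => (hcS hΔ).2.1
    · exact (Set.sInter_subset_of_mem hΔ0).trans (hcS hΔ0).2.2
  obtain ⟨Δ, hΔT, hΔmin⟩ := zorn_superset_nonempty S hchain T hTS
  obtain ⟨hfe, hΓΔ, hΔsubT⟩ := hΔmin.1
  refine ⟨Δ, ⟨hfe, hΓΔ, ?_⟩, ?_, fun φ h => hΔsubT h⟩
  · rintro ⟨Δ', hfe', hΓ', hss⟩
    have hΔ'S : Δ' ∈ S := ⟨hfe', hΓ', hss.subset.trans hΔsubT⟩
    exact hss.ne.symm (subset_antisymm (hΔmin.2 hΔ'S hss.subset) hss.subset)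
  · rintro ⟨φ, h1, h2⟩
    have hs1 : M.sat x φ := hΔsubT h1
    have hs2 : M.sat x (Formula.neg φ) := hΔsubT h2
    exact hs2 hs1


end CMATEL
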